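/- Let H ∈ ℂ^{m×m} be an unreduced upper Hessenberg matrix (H_{j+1,j} ≠ 0 for j < m, H_{ij} = 0 for i > j+1) and let M = M_vec e_m* with M_vec ∈ ℂ^m. Then for every 0 ≤ i ≤ m−1, (H + M)^i e₁ = H^i e₁. -/
import Mathlib


open Matrix

lemma krylov_support (m : ℕ) (H : Matrix (Fin (m + 1)) (Fin (m + 1)) ℂ)
    (hhess : ∀ i j : Fin (m + 1), (j : ℕ) + 1 < (i : ℕ) → H i j = 0) :
    ∀ i : ℕ, ∀ k : Fin (m + 1), i < (k : ℕ) →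
      ((H ^ i) *ᵥ Pi.single (0 : Fin (m + 1)) (1 : ℂ)) k = 0 := by
  intro i
  induction i with
  | zero =>
    intro k hk
    simp only [pow_zero, one_mulVec]
    exact Pi.single_eq_of_ne (fun h => by simp [h] at hk) 1
  | succ n ih =>
    intro k hk
    rw [pow_succ', ← mulVec_mulVec, mulVec, dotProduct]
    apply Finset.sum_eq_zero
    intro j _
    by_cases h : (j : ℕ) + 1 < (k : ℕ)
    · rw [hhess k j h, zero_mul]
    · rw [ih j (by omega), mul_zero]

/-- For an unreduced upper Hessenberg `H` of size `m+1` and a last-column rank-one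
modification `M = M_vec e_m*`, the Krylov vectors agree: `(H+M)^i e₁ = H^i e₁` for
`i ≤ m`. -/
theorem stmt_14 (m : ℕ) (H : Matrix (Fin (m + 1)) (Fin (m + 1)) ℂ)
    (hhess : ∀ i j : Fin (m + 1), (j : ℕ) + 1 < (i : ℕ) → H i j = 0)
    (hunred : ∀ j : Fin m, H j.succ j.castSucc ≠ 0)
    (Mvec : Fin (m + 1) → ℂ)
    (M : Matrix (Fin (m + 1)) (Fin (m + 1)) ℂ)
    (hM : M = Matrix.of fun i j => if j = Fin.last m then Mvec i else 0) :
    ∀ i : ℕ, i ≤ m →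
      ((H + M) ^ i) *ᵥ Pi.single (0 : Fin (m + 1)) (1 : ℂ)
        = (H ^ i) *ᵥ Pi.single (0 : Fin (m + 1)) (1 : ℂ) := by
  intro i
  induction i with
  | zero => intro _; rfl
  | succ n ih =>
    intro hn
    have hn' : n ≤ m := Nat.le_of_succ_le hn
    rw [pow_succ', pow_succ', ← mulVec_mulVec, ← mulVec_mulVec, ih hn',
      add_mulVec]
    have hlast : ((H ^ n) *ᵥ Pi.single (0 : Fin (m + 1)) (1 : ℂ)) (Fin.last m) = 0 :=
      krylov_support m H hhess n (Fin.last m) (by simp; omega)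
    have hz : M *ᵥ ((H ^ n) *ᵥ Pi.single (0 : Fin (m + 1)) (1 : ℂ)) = 0 := by
      ext k
      rw [hM, mulVec, dotProduct]
      simp only [Pi.zero_apply]
      apply Finset.sum_eq_zero
      intro j _
      by_cases h : j = Fin.last m
      · subst h; rw [hlast, mul_zero]
      · simp [h]
    rw [hz, add_zero]
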